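/- Let Ω ⊆ ℂ be non-empty and closed, A ∈ ℂ^{n×n}. The minimum of ‖A − X‖_F² over all X ∈ ℂ^{n×n} with all eigenvalues in Ω equals the minimum over all unitary U ∈ U(n) of Σ_i d_Ω²((U*AU)_{ii}) + Σ_{i>j} |(U*AU)_{ij}|², where d_Ω²(z) = min_{x∈Ω} |z−x|². -/

import Mathlib

open Matrix BigOperators Module

lemma schur_basis : ∀ (m : ℕ) (E : Type) [NormedAddCommGroup E] [InnerProductSpace ℂ E]
    [FiniteDimensional ℂ E], finrank ℂ E = m → ∀ f : E →ₗ[ℂ] E,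
    ∃ b : OrthonormalBasis (Fin m) ℂ E, ∀ i j : Fin m, j < i →
      (inner ℂ (b i) (f (b j)) : ℂ) = 0 := by
  intro m
  induction m with
  | zero =>
    intro E _ _ _ hE f
    have : Subsingleton E := (finrank_zero_iff (R := ℂ)).mp hE
    refine ⟨OrthonormalBasis.mk (v := Fin.elim0) ⟨fun i => i.elim0, fun i => i.elim0⟩ ?_,
      fun i => i.elim0⟩
    intro x _
    have : x = 0 := Subsingleton.elim x 0
    simp [this]
  | succ m ih =>
    intro E _ _ _ hE f
    have hnt : Nontrivial E := nontrivial_of_finrank_eq_succ hE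
    obtain ⟨μ, hμ⟩ := Module.End.exists_eigenvalue (f : Module.End ℂ E)
    obtain ⟨v, hv⟩ := hμ.exists_hasEigenvector
    have hv0 : v ≠ 0 := hv.right
    have hvn : ((‖v‖ : ℂ))⁻¹ ≠ 0 := by
      simp [Complex.ofReal_ne_zero, norm_eq_zero, hv0]
    set u : E := (‖v‖ : ℂ)⁻¹ • v with hu_def
    have hu0 : u ≠ 0 := smul_ne_zero hvn hv0
    have hunorm : ‖u‖ = 1 := by
      have h1 : ‖((‖v‖ : ℂ))⁻¹‖ = ‖v‖⁻¹ := by simp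
      rw [hu_def, norm_smul, h1, inv_mul_cancel₀ (norm_ne_zero_iff.mpr hv0)]
    have hfu : f u = μ • u := by
      rw [hu_def, LinearMap.map_smul, hv.apply_eq_smul, smul_comm]
    set K : Submodule ℂ E := (ℂ ∙ u)ᗮ with hK_def
    have hKrank : finrank ℂ K = m := by
      have h1 : finrank ℂ (ℂ ∙ u) = 1 := finrank_span_singleton hu0
      have h2 := Submodule.finrank_add_finrank_orthogonal (𝕜 := ℂ) (ℂ ∙ u)
      rw [h1, hE, ← hK_def] at h2
      omega
    set g : K →ₗ[ℂ] K :=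
      (Submodule.orthogonalProjection K).toLinearMap.comp (f.comp K.subtype) with hg_def
    obtain ⟨b', hb'⟩ := ih K hKrank g
    set w : Fin (m + 1) → E := Fin.cons u (fun i => (b' i : E)) with hw_def
    have hmemK : ∀ i, (b' i : E) ∈ K := fun i => (b' i).2
    have huw : ∀ i, (inner ℂ u ((b' i : E)) : ℂ) = 0 := fun i =>
      (Submodule.mem_orthogonal _ _).mp (hmemK i) u (Submodule.mem_span_singleton_self u)
    have hwu : ∀ i, (inner ℂ ((b' i : E)) u : ℂ) = 0 := by
      intro i
      rw [← inner_conj_symm, huw i, map_zero]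
    have hw_on : Orthonormal ℂ w := by
      rw [orthonormal_iff_ite]
      intro i j
      obtain rfl | ⟨i', rfl⟩ := Fin.eq_zero_or_eq_succ i <;>
        obtain rfl | ⟨j', rfl⟩ := Fin.eq_zero_or_eq_succ j
      · simp [hw_def, inner_self_eq_norm_sq_to_K, hunorm]
      · simp [hw_def, huw j', (Fin.succ_ne_zero j').symm]
      · simp [hw_def, hwu i', Fin.succ_ne_zero i']
      · have h3 : (inner ℂ ((b' i' : E)) ((b' j' : E)) : ℂ) = if i' = j' then 1 else 0 := by
          rw [← Submodule.coe_inner]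
          exact orthonormal_iff_ite.mp b'.orthonormal i' j'
        simpa [hw_def, Fin.succ_inj] using h3
    have hspan : ⊤ ≤ Submodule.span ℂ (Set.range w) := by
      have hcard : Fintype.card (Fin (m + 1)) = finrank ℂ E := by simp [hE]
      exact (hw_on.linearIndependent.span_eq_top_of_card_eq_finrank hcard).ge
    refine ⟨OrthonormalBasis.mk hw_on hspan, ?_⟩
    intro i j hij
    rw [OrthonormalBasis.coe_mk]
    obtain rfl | ⟨j', rfl⟩ := Fin.eq_zero_or_eq_succ j
    · obtain ⟨i', rfl⟩ := Fin.eq_succ_of_ne_zero (Fin.pos_iff_ne_zero.mp hij)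
      simp only [hw_def, Fin.cons_zero, Fin.cons_succ]
      rw [hfu, inner_smul_right, hwu i', mul_zero]
    · obtain ⟨i', rfl⟩ := Fin.eq_succ_of_ne_zero
        (Fin.pos_iff_ne_zero.mp (lt_trans (Fin.succ_pos j') hij))
      have hij' : j' < i' := by
        rwa [Fin.succ_lt_succ_iff] at hij
      simp only [hw_def, Fin.cons_succ]
      have h4 := hb' i' j' hij'
      rw [hg_def] at h4
      simp only [LinearMap.coe_comp, Function.comp_apply, ContinuousLinearMap.coe_coe,
        Submodule.coe_subtype] at h4
      rw [← Submodule.inner_orthogonalProjection_eq_of_mem_left (K := K) (b' i') (f ↑(b' j'))]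
      exact h4

variable {n : ℕ}

lemma tri_spec (T : Matrix (Fin n) (Fin n) ℂ) (hT : ∀ i j : Fin n, j < i → T i j = 0)
    (z : ℂ) : z ∈ spectrum ℂ T ↔ ∃ i, z = T i i := by
  have htri : ((Matrix.scalar (Fin n)) z - T).BlockTriangular id := by
    intro i j hij
    have hne : i ≠ j := (hij : (j:Fin n) < i).ne'
    simp [Matrix.scalar_apply, Matrix.diagonal_apply, hne, hT i j hij]
  rw [spectrum.mem_iff, Matrix.isUnit_iff_isUnit_det]
  rw [show (algebraMap ℂ (Matrix (Fin n) (Fin n) ℂ)) z = Matrix.scalar (Fin n) z from rfl]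
  rw [Matrix.det_of_upperTriangular htri, isUnit_iff_ne_zero, not_not,
    Finset.prod_eq_zero_iff]
  constructor
  · rintro ⟨i, -, hi⟩
    exact ⟨i, sub_eq_zero.mp (by simpa [Matrix.scalar_apply] using hi)⟩
  · rintro ⟨i, hi⟩
    exact ⟨i, Finset.mem_univ i, by simp [Matrix.scalar_apply, sub_eq_zero, hi]⟩

lemma spec_conj (U X : Matrix (Fin n) (Fin n) ℂ) (hU : U ∈ Matrix.unitaryGroup (Fin n) ℂ) :
    spectrum ℂ (Uᴴ * X * U) = spectrum ℂ X := by
  have h1 : Uᴴ * U = 1 := Matrix.UnitaryGroup.star_mul_self ⟨U, hU⟩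
  ext z
  rw [spectrum.mem_iff, spectrum.mem_iff, not_iff_not,
    Matrix.isUnit_iff_isUnit_det, Matrix.isUnit_iff_isUnit_det]
  have key : (algebraMap ℂ (Matrix (Fin n) (Fin n) ℂ)) z - Uᴴ * X * U
      = Uᴴ * ((algebraMap ℂ (Matrix (Fin n) (Fin n) ℂ)) z - X) * U := by
    rw [Matrix.mul_sub, Matrix.sub_mul]
    congr 1
    rw [Algebra.algebraMap_eq_smul_one]
    rw [Matrix.mul_smul, Matrix.mul_one, Matrix.smul_mul, h1]
  have hdet : Uᴴ.det * U.det = 1 := by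
    rw [← Matrix.det_mul, h1, Matrix.det_one]
  rw [key, Matrix.det_mul, Matrix.det_mul, isUnit_iff_ne_zero, isUnit_iff_ne_zero]
  have hU0 : U.det ≠ 0 := fun h => by simp [h] at hdet
  have hUH0 : Uᴴ.det ≠ 0 := fun h => by simp [h] at hdet
  constructor
  · intro h hc; exact h (by rw [hc, mul_zero, zero_mul])
  · intro h hc
    rcases mul_eq_zero.mp hc with hc | hc
    · rcases mul_eq_zero.mp hc with hc | hc
      · exact hUH0 hc
      · exact h hc
    · exact hU0 hc
variable {n : ℕ}

lemma frob_eq_trace (M : Matrix (Fin n) (Fin n) ℂ) :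
    ∑ i, ∑ j, ‖M i j‖ ^ 2 = ((Mᴴ * M).trace).re := by
  have h : (Mᴴ * M).trace = ∑ j, ∑ i, (starRingEnd ℂ) (M i j) * M i j := by
    simp [Matrix.trace, Matrix.diag, Matrix.mul_apply, Matrix.conjTranspose_apply]
  rw [h, Complex.re_sum]
  simp only [Complex.re_sum]
  rw [Finset.sum_comm]
  refine Finset.sum_congr rfl fun i _ => Finset.sum_congr rfl fun j _ => ?_
  rw [mul_comm, Complex.mul_conj, Complex.ofReal_re, Complex.normSq_eq_norm_sq]

lemma frob_conj (U M : Matrix (Fin n) (Fin n) ℂ) (hU : U ∈ Matrix.unitaryGroup (Fin n) ℂ) :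
    ∑ i, ∑ j, ‖(Uᴴ * M * U) i j‖ ^ 2 = ∑ i, ∑ j, ‖M i j‖ ^ 2 := by
  have h2 : U * Uᴴ = 1 := by
    have := Matrix.mem_unitaryGroup_iff.mp hU
    rwa [Matrix.star_eq_conjTranspose] at this
  rw [frob_eq_trace, frob_eq_trace]
  congr 1
  have e : (Uᴴ * M * U)ᴴ * (Uᴴ * M * U) = Uᴴ * (Mᴴ * M * U) := by
    rw [Matrix.conjTranspose_mul, Matrix.conjTranspose_mul, Matrix.conjTranspose_conjTranspose]
    simp only [Matrix.mul_assoc]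
    rw [show U * (Uᴴ * (M * U)) = M * U from by
      rw [← Matrix.mul_assoc U Uᴴ, h2, Matrix.one_mul]]
  rw [e, Matrix.trace_mul_comm, Matrix.mul_assoc, h2, Matrix.mul_one]

variable {n : ℕ}

lemma frob_split (r : Fin n → ℝ) (c : Fin n → Fin n → ℝ) :
    ∑ i, ∑ j, ((if j = i then r i else 0) + (if j < i then c i j else 0))
      = (∑ i, r i) + ∑ i, ∑ j, (if j < i then c i j else 0) := by
  rw [← Finset.sum_add_distrib]
  refine Finset.sum_congr rfl fun i _ => ?_
  rw [Finset.sum_add_distrib, Finset.sum_ite_eq' Finset.univ i (fun _ => r i)]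
  simp
lemma schur_matrix (n : ℕ) (X : Matrix (Fin n) (Fin n) ℂ) :
    ∃ U ∈ Matrix.unitaryGroup (Fin n) ℂ, ∀ i j : Fin n, j < i → (Uᴴ * X * U) i j = 0 := by
  classical
  set f : EuclideanSpace ℂ (Fin n) →ₗ[ℂ] EuclideanSpace ℂ (Fin n) :=
    { toFun := fun x => WithLp.toLp 2 (X.mulVec x)
      map_add' := fun x y => by simp [Matrix.mulVec_add]
      map_smul' := fun c x => by simp [Matrix.mulVec_smul] } with hf_def
  obtain ⟨b, hb⟩ := schur_basis n (EuclideanSpace ℂ (Fin n)) finrank_euclideanSpace_fin f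
  set U : Matrix (Fin n) (Fin n) ℂ := Matrix.of (fun i j => b j i) with hU_def
  have hinner : ∀ x y : EuclideanSpace ℂ (Fin n),
      (inner ℂ x y : ℂ) = ∑ k, (starRingEnd ℂ) (x k) * y k := by
    intro x y
    simp [PiLp.inner_apply, RCLike.inner_apply, mul_comm]
  have hUU : U ∈ Matrix.unitaryGroup (Fin n) ℂ := by
    rw [Matrix.mem_unitaryGroup_iff']
    ext i j
    have := orthonormal_iff_ite.mp b.orthonormal i j
    rw [hinner] at this
    simp only [Matrix.mul_apply, Matrix.star_eq_conjTranspose, Matrix.conjTranspose_apply,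
      hU_def, Matrix.of_apply, Matrix.one_apply, Complex.star_def]
    rw [this]
  have hentry : ∀ i j, (Uᴴ * X * U) i j = (inner ℂ (b i) (f (b j)) : ℂ) := by
    intro i j
    rw [Matrix.mul_assoc, hinner]
    simp only [Matrix.mul_apply, Matrix.conjTranspose_apply, hU_def, Matrix.of_apply,
      hf_def, LinearMap.coe_mk, AddHom.coe_mk, Matrix.mulVec, dotProduct, WithLp.ofLp_toLp, Complex.star_def]
  exact ⟨U, hUU, fun i j hij => by rw [hentry]; exact hb i j hij⟩

/-- The minimal squared Frobenius distance from A to the Ω-stable matrices equals the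
minimum over unitary U of the sum of squared distances of the diagonal of U*AU to Ω
plus the squared norms of the strictly lower triangular entries. -/
theorem stmt_1 (n : ℕ) (Ω : Set ℂ) (hΩne : Ω.Nonempty) (hΩcl : IsClosed Ω)
    (A : Matrix (Fin n) (Fin n) ℂ) :
    sInf {d : ℝ | ∃ X : Matrix (Fin n) (Fin n) ℂ, spectrum ℂ X ⊆ Ω ∧
        d = ∑ i, ∑ j, ‖A i j - X i j‖ ^ 2} =
    sInf {d : ℝ | ∃ U ∈ Matrix.unitaryGroup (Fin n) ℂ,
        d = (∑ i, (Metric.infDist (((Uᴴ : Matrix (Fin n) (Fin n) ℂ) * A * U) i i) Ω) ^ 2) +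
            ∑ i, ∑ j, (if j < i then
              ‖((Uᴴ : Matrix (Fin n) (Fin n) ℂ) * A * U) i j‖ ^ 2 else 0)} := by
  classical
  obtain ⟨ω, hω⟩ := hΩne
  set S₁ : Set ℝ := {d : ℝ | ∃ X : Matrix (Fin n) (Fin n) ℂ, spectrum ℂ X ⊆ Ω ∧
      d = ∑ i, ∑ j, ‖A i j - X i j‖ ^ 2} with hS₁
  set S₂ : Set ℝ := {d : ℝ | ∃ U ∈ Matrix.unitaryGroup (Fin n) ℂ,
      d = (∑ i, (Metric.infDist (((Uᴴ : Matrix (Fin n) (Fin n) ℂ) * A * U) i i) Ω) ^ 2) +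
          ∑ i, ∑ j, (if j < i then
            ‖((Uᴴ : Matrix (Fin n) (Fin n) ℂ) * A * U) i j‖ ^ 2 else 0)} with hS₂
  have bdd₁ : BddBelow S₁ := by
    refine ⟨0, fun d hd => ?_⟩
    obtain ⟨X, -, rfl⟩ := hd
    apply Finset.sum_nonneg; intro i _
    apply Finset.sum_nonneg; intro j _
    positivity
  have bdd₂ : BddBelow S₂ := by
    refine ⟨0, fun d hd => ?_⟩
    obtain ⟨U, -, rfl⟩ := hd
    apply add_nonneg
    · apply Finset.sum_nonneg; intro i _; positivity
    · apply Finset.sum_nonneg; intro i _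
      apply Finset.sum_nonneg; intro j _
      split <;> positivity
  have ne₂ : S₂.Nonempty := ⟨_, 1, one_mem _, rfl⟩
  have ne₁ : S₁.Nonempty := by
    refine ⟨_, Matrix.diagonal (fun _ => ω), ?_, rfl⟩
    intro z hz
    obtain ⟨i, hi⟩ := (tri_spec _ (fun i j hij => Matrix.diagonal_apply_ne _ hij.ne') z).mp hz
    rw [hi, Matrix.diagonal_apply_eq]
    exact hω
  apply le_antisymm
  · -- sInf S₁ ≤ sInf S₂
    apply le_csInf ne₂
    rintro d ⟨U, hU, rfl⟩
    have h1 : Uᴴ * U = 1 := Matrix.UnitaryGroup.star_mul_self ⟨U, hU⟩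
    set B : Matrix (Fin n) (Fin n) ℂ := Uᴴ * A * U with hB
    have hts : ∀ i : Fin n, ∃ y ∈ Ω, Metric.infDist (B i i) Ω = dist (B i i) y :=
      fun i => hΩcl.exists_infDist_eq_dist ⟨ω, hω⟩ _
    choose t htΩ htd using hts
    set T : Matrix (Fin n) (Fin n) ℂ :=
      Matrix.of (fun i j => if i = j then (t i : ℂ) else if j < i then 0 else B i j) with hT
    have hTtri : ∀ i j : Fin n, j < i → T i j = 0 := by
      intro i j hij
      simp [hT, hij.ne', hij]
    have hTdiag : ∀ i, T i i = t i := by intro i; simp [hT]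
    set X : Matrix (Fin n) (Fin n) ℂ := U * T * Uᴴ with hX
    have hXspec : spectrum ℂ X ⊆ Ω := by
      have hsU : Uᴴ ∈ Matrix.unitaryGroup (Fin n) ℂ := by
        have := Unitary.star_mem hU
        rwa [Matrix.star_eq_conjTranspose] at this
      have hspec := spec_conj Uᴴ T hsU
      rw [Matrix.conjTranspose_conjTranspose] at hspec
      rw [hX, hspec]
      intro z hz
      obtain ⟨i, hi⟩ := (tri_spec T hTtri z).mp hz
      rw [hi, hTdiag]
      exact htΩ i
    refine csInf_le bdd₁ ⟨X, hXspec, ?_⟩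
    have hconj : Uᴴ * (A - X) * U = B - T := by
      rw [Matrix.mul_sub, Matrix.sub_mul]
      congr 1
      calc Uᴴ * (U * T * Uᴴ) * U = (Uᴴ * U) * T * (Uᴴ * U) := by
            simp only [Matrix.mul_assoc]
        _ = T := by rw [h1, Matrix.one_mul, Matrix.mul_one]
    have hfr := frob_conj U (A - X) hU
    rw [hconj] at hfr
    have hAX : ∀ i j : Fin n, A i j - X i j = (A - X) i j := by
      intro i j; simp [Matrix.sub_apply]
    have key : ∑ i, ∑ j, ‖(B - T) i j‖ ^ 2
        = (∑ i, (Metric.infDist (B i i) Ω) ^ 2) +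
          ∑ i, ∑ j, (if j < i then ‖B i j‖ ^ 2 else 0) := by
      rw [← frob_split (fun i => (Metric.infDist (B i i) Ω) ^ 2)
        (fun i j => ‖B i j‖ ^ 2)]
      refine Finset.sum_congr rfl fun i _ => Finset.sum_congr rfl fun j _ => ?_
      by_cases hji : j = i
      · subst hji
        rw [Matrix.sub_apply, hTdiag, htd]
        simp [Complex.dist_eq, lt_irrefl]
      · by_cases hlt : j < i
        · rw [Matrix.sub_apply, hTtri i j hlt, sub_zero]
          simp [hji, hlt]
        · have hij : i < j := by
            rcases lt_trichotomy j i with h | h | h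
            · exact absurd h hlt
            · exact absurd h hji
            · exact h
          rw [Matrix.sub_apply]
          have : T i j = B i j := by simp [hT, (Ne.symm hji), not_lt.mpr hij.le, hij.not_gt]
          rw [this, sub_self]
          simp [hji, hlt]
    simp only [hAX]
    rw [← hfr, key]
  · -- sInf S₂ ≤ sInf S₁
    apply le_csInf ne₁
    rintro d ⟨X, hXspec, rfl⟩
    obtain ⟨U, hU, hTri⟩ := schur_matrix n X
    set B : Matrix (Fin n) (Fin n) ℂ := Uᴴ * A * U with hB
    set T : Matrix (Fin n) (Fin n) ℂ := Uᴴ * X * U with hT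
    have hTΩ : ∀ i, T i i ∈ Ω := by
      intro i
      have h1 : T i i ∈ spectrum ℂ T := (tri_spec T hTri _).mpr ⟨i, rfl⟩
      rw [hT, spec_conj U X hU] at h1
      rw [hT]
      exact hXspec h1
    refine le_trans (csInf_le bdd₂ ⟨U, hU, rfl⟩) ?_
    have hfr := frob_conj U (A - X) hU
    have hconj : Uᴴ * (A - X) * U = B - T := by
      rw [Matrix.mul_sub, Matrix.sub_mul]
    rw [hconj] at hfr
    have hAX : ∀ i j : Fin n, A i j - X i j = (A - X) i j := by
      intro i j; simp [Matrix.sub_apply]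
    simp only [hAX]
    rw [← hfr, ← hB]
    rw [← frob_split (fun i => (Metric.infDist (B i i) Ω) ^ 2)
      (fun i j => ‖B i j‖ ^ 2)]
    refine Finset.sum_le_sum fun i _ => Finset.sum_le_sum fun j _ => ?_
    by_cases hji : j = i
    · subst hji
      rw [if_pos rfl, if_neg (lt_irrefl j), add_zero]
      have hle : Metric.infDist (B j j) Ω ≤ ‖(B - T) j j‖ := by
        have h5 := Metric.infDist_le_dist_of_mem (x := B j j) (hTΩ j)
        rwa [Complex.dist_eq, ← Matrix.sub_apply] at h5
      exact pow_le_pow_left₀ Metric.infDist_nonneg hle 2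
    · rw [if_neg hji, zero_add]
      by_cases hlt : j < i
      · rw [if_pos hlt, Matrix.sub_apply, hTri i j hlt, sub_zero]
      · rw [if_neg hlt]
        positivity
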